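/- (Preintegration with Coriolis effect.) Let Ω, g ∈ ℝ³ and ω, a : ℝ → ℝ³. Let R^υ : ℝ → ℝ³ˣ³, V^υ, X^υ : ℝ → ℝ³ be differentiable with R^υ_0 = I₃, V^υ_0 = 0, X^υ_0 = 0, dR^υ_t/dt = R^υ_t(ω_t)ₓ, dV^υ_t/dt = R^υ_t a_t, dX^υ_t/dt = V^υ_t. Let Γ^R : ℝ → ℝ³ˣ³ and Γ^v, Γ^x : ℝ → ℝ³ be differentiable with Γ^R_0 = I₃, Γ^v_0 = 0, Γ^x_0 = 0, dΓ^R_t/dt = −Ωₓ Γ^R_t, dΓ^v_t/dt = g − Ωₓ Γ^v_t, dΓ^x_t/dt = Γ^v_t − Ωₓ Γ^x_t. Fix R₀ ∈ SO(3), V₀, X₀ ∈ ℝ³ and set V₀' = V₀ + Ωₓ X₀. Define R_t = Γ^R_t R₀ R^υ_t, X_t = Γ^x_t + Γ^R_t R₀ X^υ_t + t Γ^R_t V₀' + Γ^R_t X₀, and V_t = Γ^v_t + Γ^R_t R₀ V^υ_t + Γ^R_t V₀' − Ωₓ X_t. Then (R_t, V_t, X_t) satisfies exactly the rotating-Earth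 navigation equations dR_t/dt = −Ωₓ R_t + R_t(ω_t)ₓ, dV_t/dt = g + R_t a_t − 2Ωₓ V_t − Ωₓ² X_t, dX_t/dt = V_t, with initial condition (R₀, V₀, X₀). -/

import Mathlib

open Matrix

noncomputable section

abbrev M3 := Matrix (Fin 3) (Fin 3) ℝ
abbrev M5 := Matrix (Fin 5) (Fin 5) ℝ
abbrev V3 := Fin 3 → ℝ
abbrev V9 := V3 × V3 × V3

/-- Skew-symmetric cross-product matrix `(ω)ₓ`. -/
def skew (ω : V3) : M3 := !![0, -ω 2, ω 1; ω 2, 0, -ω 0; -ω 1, ω 0, 0]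

/-- 5×5 block matrix `[[A, v, x],[0₁ₓ₃, d, 0],[0₁ₓ₃, 0, e]]`. -/
def blk (A : M3) (v x : V3) (d e : ℝ) : M5 :=
  !![A 0 0, A 0 1, A 0 2, v 0, x 0;
     A 1 0, A 1 1, A 1 2, v 1, x 1;
     A 2 0, A 2 1, A 2 2, v 2, x 2;
     0, 0, 0, d, 0;
     0, 0, 0, 0, e]

/-- Element of `SE₂(3)` built from rotation `R`, velocity `V`, position `X`. -/
def se23 (R : M3) (V X : V3) : M5 := blk R V X 1 1

/-- The hat map `ξ^∧` of `ξ = (ω, v, x) ∈ ℝ⁹`. -/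
def hat (ω v x : V3) : M5 := blk (skew ω) v x 0 0

def hat9 (ξ : V9) : M5 := hat ξ.1 ξ.2.1 ξ.2.2

def IsSO3 (R : M3) : Prop := Rᵀ * R = 1 ∧ R.det = 1

def IsSE23 (T : M5) : Prop := ∃ R V X, IsSO3 R ∧ T = se23 R V X

/-- Rotation block of a 5×5 matrix. -/
def Rof (T : M5) : M3 := Matrix.of fun i j => T (Fin.castLE (by omega) i) (Fin.castLE (by omega) j)

/-- Velocity column of a 5×5 matrix. -/
def Vof (T : M5) : V3 := fun i => T (Fin.castLE (by omega) i) 3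

/-- Position column of a 5×5 matrix. -/
def Xof (T : M5) : V3 := fun i => T (Fin.castLE (by omega) i) 4

/-- Adjoint of `T ∈ SE₂(3)` acting on `ξ = (ω, v, x) ∈ ℝ⁹`:
  `[[R, 0, 0],[(V)ₓR, R, 0],[(X)ₓR, 0, R]]`. -/
def Ad (T : M5) (ξ : V9) : V9 :=
  (Rof T *ᵥ ξ.1,
   (skew (Vof T) * Rof T) *ᵥ ξ.1 + Rof T *ᵥ ξ.2.1,
   (skew (Xof T) * Rof T) *ᵥ ξ.1 + Rof T *ᵥ ξ.2.2)

/-- `f(T)` : places the velocity column of `T` in the position column. -/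
def fmap (T : M5) : M5 := blk 0 0 (Vof T) 0 0

/-- `Φ_t` : maps `[[R,V,X],...]` to `[[R,V,X+tV],...]` (acting on the top three rows). -/
def Phi (t : ℝ) (T : M5) : M5 :=
  Matrix.of fun i j => if (i : ℕ) < 3 ∧ (j : ℕ) = 4 then T i j + t * T i 3 else T i j

/-- The linear map `F : (ω,v,x) ↦ (ω, v, x + Δt·v)`. -/
def Fmap (Δt : ℝ) (ξ : V9) : V9 := (ξ.1, ξ.2.1, ξ.2.2 + Δt • ξ.2.1)

attribute [local instance] Matrix.normedAddCommGroup Matrix.normedSpace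

lemma hasDerivAt_entry {A : ℝ → M3} {A' : M3} {t : ℝ} (h : HasDerivAt A A' t) (i j : Fin 3) :
    HasDerivAt (fun s => A s i j) (A' i j) t := by
  have h1 := hasDerivAt_pi.mp h i
  exact hasDerivAt_pi.mp h1 j

lemma hasDerivAt_ventry {v : ℝ → V3} {v' : V3} {t : ℝ} (h : HasDerivAt v v' t) (i : Fin 3) :
    HasDerivAt (fun s => v s i) (v' i) t := hasDerivAt_pi.mp h i

lemma hasDerivAt_matmul {A B : ℝ → M3} {A' B' : M3} {t : ℝ}
    (hA : HasDerivAt A A' t) (hB : HasDerivAt B B' t) :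
    HasDerivAt (fun s => A s * B s) (A' * B t + A t * B') t := by
  refine hasDerivAt_pi.mpr ?_; intro i
  rw [hasDerivAt_pi]; intro j
  have : ∀ s, (A s * B s) i j = ∑ k, A s i k * B s k j := fun s => Matrix.mul_apply
  simp only [this]
  have := HasDerivAt.fun_sum (u := Finset.univ)
    (fun k _ => (hasDerivAt_entry hA i k).mul (hasDerivAt_entry hB k j))
  convert this using 1
  all_goals simp [Matrix.mul_apply, Matrix.add_apply, Finset.sum_add_distrib]

lemma hasDerivAt_mulvec {A : ℝ → M3} {v : ℝ → V3} {A' : M3} {v' : V3} {t : ℝ}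
    (hA : HasDerivAt A A' t) (hv : HasDerivAt v v' t) :
    HasDerivAt (fun s => A s *ᵥ v s) (A' *ᵥ v t + A t *ᵥ v') t := by
  rw [hasDerivAt_pi]; intro i
  have : ∀ s, (A s *ᵥ v s) i = ∑ k, A s i k * v s k := fun s => rfl
  simp only [this]
  have := HasDerivAt.fun_sum (u := Finset.univ)
    (fun k _ => (hasDerivAt_entry hA i k).mul (hasDerivAt_ventry hv k))
  convert this using 1
  all_goals simp [Matrix.mulVec, dotProduct, Finset.sum_add_distrib]

/-- exact preintegration with Coriolis and centrifugal effects: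
the reconstructed `(R, V, X)` solves the rotating-Earth navigation equations with
initial condition `(R₀, V₀, X₀)`. -/
theorem stmt_9 (Ω g : V3) (ω a : ℝ → V3)
    (Rυ : ℝ → M3) (Vυ Xυ : ℝ → V3)
    (hRυ0 : Rυ 0 = 1) (hVυ0 : Vυ 0 = 0) (hXυ0 : Xυ 0 = 0)
    (hRυ : ∀ t, HasDerivAt Rυ (Rυ t * skew (ω t)) t)
    (hVυ : ∀ t, HasDerivAt Vυ (Rυ t *ᵥ a t) t)
    (hXυ : ∀ t, HasDerivAt Xυ (Vυ t) t)
    (ΓR : ℝ → M3) (Γv Γx : ℝ → V3)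
    (hΓR0 : ΓR 0 = 1) (hΓv0 : Γv 0 = 0) (hΓx0 : Γx 0 = 0)
    (hΓR : ∀ t, HasDerivAt ΓR (-(skew Ω) * ΓR t) t)
    (hΓv : ∀ t, HasDerivAt Γv (g - skew Ω *ᵥ Γv t) t)
    (hΓx : ∀ t, HasDerivAt Γx (Γv t - skew Ω *ᵥ Γx t) t)
    (R₀ : M3) (hR₀ : IsSO3 R₀) (V₀ X₀ : V3) :
    let V₀' : V3 := V₀ + skew Ω *ᵥ X₀
    let Rt : ℝ → M3 := fun t => ΓR t * R₀ * Rυ t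
    let Xt : ℝ → V3 := fun t =>
      Γx t + (ΓR t * R₀) *ᵥ Xυ t + t • (ΓR t *ᵥ V₀') + ΓR t *ᵥ X₀
    let Vt : ℝ → V3 := fun t =>
      Γv t + (ΓR t * R₀) *ᵥ Vυ t + ΓR t *ᵥ V₀' - skew Ω *ᵥ Xt t
    Rt 0 = R₀ ∧ Vt 0 = V₀ ∧ Xt 0 = X₀ ∧
      ∀ t, HasDerivAt Rt (-(skew Ω) * Rt t + Rt t * skew (ω t)) t ∧
           HasDerivAt Vt (g + Rt t *ᵥ a t - (2 : ℝ) • (skew Ω *ᵥ Vt t)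
             - (skew Ω * skew Ω) *ᵥ Xt t) t ∧
           HasDerivAt Xt (Vt t) t := by
  intro V₀' Rt Xt Vt
  have hA : ∀ t, HasDerivAt (fun s => ΓR s * R₀) (-(skew Ω) * ΓR t * R₀) t := by
    intro t
    have := hasDerivAt_matmul (hΓR t) (hasDerivAt_const t R₀)
    simpa [Matrix.mul_assoc] using this
  have hXd : ∀ t, HasDerivAt Xt (Vt t) t := by
    intro t
    have h2 := hasDerivAt_mulvec (hA t) (hXυ t)
    have h3 := (hasDerivAt_id t).smul
      (hasDerivAt_mulvec (hΓR t) (hasDerivAt_const t V₀'))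
    have h4 := hasDerivAt_mulvec (hΓR t) (hasDerivAt_const t X₀)
    have tot := (((hΓx t).add h2).add h3).add h4
    have key : HasDerivAt Xt
        (Γv t + (ΓR t * R₀) *ᵥ Vυ t + ΓR t *ᵥ V₀' - skew Ω *ᵥ Xt t) t := by
      convert tot using 1
      case e'_4 => rfl
      case e'_5 => rfl
      case e'_6 => rfl
      case e'_8 => rfl
      simp only [Xt, Vt, Rt, id_eq, Matrix.mulVec_add, Matrix.mulVec_sub, Matrix.mulVec_neg,
        Matrix.mulVec_smul, Matrix.mulVec_mulVec, Matrix.neg_mulVec, Matrix.zero_mulVec,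
        Matrix.mulVec_zero, Matrix.mul_assoc, Matrix.neg_mul, Matrix.zero_mul, one_smul,
        two_smul, smul_add, smul_neg, smul_sub, add_zero, neg_neg, neg_zero, smul_zero, zero_add]
      abel
    exact key
  refine ⟨?_, ?_, ?_, fun t => ⟨?_, ?_, hXd t⟩⟩
  · simp [Rt, hΓR0, hRυ0]
  · simp only [Vt, Xt, V₀', hΓv0, hVυ0, hΓx0, hXυ0, hΓR0, Matrix.one_mul,
      Matrix.mulVec_zero, Matrix.one_mulVec, zero_add, add_zero, zero_smul, smul_zero]
    abel
  · simp [Xt, hΓx0, hXυ0, hΓR0]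
  · -- Rt derivative
    have h1 := hasDerivAt_matmul (hA t) (hRυ t)
    have key : HasDerivAt Rt
        (-(skew Ω) * Rt t + Rt t * skew (ω t)) t := by
      convert h1 using 1
      simp [Rt, Matrix.mul_assoc]
    exact key
  · -- Vt derivative
    have h2 := hasDerivAt_mulvec (hA t) (hVυ t)
    have h3 := hasDerivAt_mulvec (hΓR t) (hasDerivAt_const t V₀')
    have h4 := hasDerivAt_mulvec (hasDerivAt_const t (skew Ω)) (hXd t)
    have tot := (((hΓv t).add h2).add h3).sub h4
    have key : HasDerivAt Vt
        (g + Rt t *ᵥ a t - (2 : ℝ) • (skew Ω *ᵥ Vt t)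
          - (skew Ω * skew Ω) *ᵥ Xt t) t := by
      convert tot using 1
      case e'_4 => rfl
      case e'_5 => rfl
      case e'_6 => rfl
      case e'_8 => rfl
      simp only [Xt, Vt, Rt, id_eq, Matrix.mulVec_add, Matrix.mulVec_sub, Matrix.mulVec_neg,
        Matrix.mulVec_smul, Matrix.mulVec_mulVec, Matrix.neg_mulVec, Matrix.zero_mulVec,
        Matrix.mulVec_zero, Matrix.mul_assoc, Matrix.neg_mul, Matrix.zero_mul, one_smul,
        two_smul, smul_add, smul_neg, smul_sub, add_zero, neg_neg, neg_zero, smul_zero, zero_add]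
      abel
    exact key
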